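/- Let m > 0, σ > 0, and let Ψ(a,t) = (128σ³/π)^{1/4} · exp((3/2)·Log(m/(m + 2iσt))) · a · exp(-σ m a²/(m + 2iσt)) (principal branch). Then for every t ∈ ℝ the expectation value of the scale factor satisfies ∫₀^∞ a |Ψ(a,t)|² da = (2/m) √(2/(πσ)) · √(m²/4 + σ²t²). -/

import Mathlib

open MeasureTheory Set

lemma aux_cube_integral (b : ℝ) (hb : 0 < b) :
    ∫ x in Set.Ioi (0:ℝ), x^3 * Real.exp (-b * x^2) = 1/(2*b^2) := by
  have h := integral_comp_rpow_Ioi_of_pos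
    (g := fun y : ℝ => (y * Real.exp (-(b*y)))/2) (p := 2) two_pos
  have h1 : ∫ x in Set.Ioi (0:ℝ), ((2:ℝ) * x ^ ((2:ℝ)-1)) •
      ((x ^ (2:ℝ) * Real.exp (-(b * x ^ (2:ℝ))))/2)
      = ∫ x in Set.Ioi (0:ℝ), x^3 * Real.exp (-b * x^2) := by
    refine setIntegral_congr_fun measurableSet_Ioi (fun x hx => ?_)
    have hx0 : (0:ℝ) < x := hx
    have e1 : x ^ ((2:ℝ)-1) = x := by norm_num
    have e2 : x ^ (2:ℝ) = x^2 := by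
      rw [show (2:ℝ) = ((2:ℕ):ℝ) by norm_num, Real.rpow_natCast]
    rw [e1, e2, smul_eq_mul]
    ring_nf
  have h2 : ∫ y in Set.Ioi (0:ℝ), (y * Real.exp (-(b*y)))/2 = 1/(2*b^2) := by
    rw [integral_div]
    have h3 : ∫ y in Set.Ioi (0:ℝ), y * Real.exp (-(b*y))
        = ∫ y in Set.Ioi (0:ℝ), y ^ ((2:ℝ)-1) * Real.exp (-(b*y)) := by
      refine setIntegral_congr_fun measurableSet_Ioi (fun y hy => ?_)
      have : y ^ ((2:ℝ)-1) = y := by norm_num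
      rw [this]
    rw [h3, Real.integral_rpow_mul_exp_neg_mul_Ioi two_pos hb, Real.Gamma_two]
    rw [show ((1:ℝ)/b) ^ (2:ℝ) = (1/b)^2 by
      rw [show (2:ℝ) = ((2:ℕ):ℝ) by norm_num, Real.rpow_natCast]]
    field_simp
  rw [← h1]
  rw [h, h2]

/-- Expectation value of the scale factor in the flat Hořava–Lifshitz quantum
universe: for the evolved Gaussian wave packet `Ψ`,
`⟨a⟩(t) = ∫₀^∞ a |Ψ(a,t)|² da = (2/m) √(2/(πσ)) √(m²/4 + σ²t²)`. -/
theorem flat_universe_scale_factor_expectation (m σ : ℝ) (hm : 0 < m) (hσ : 0 < σ)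
    (Ψ : ℝ → ℝ → ℂ)
    (hΨ : ∀ a t : ℝ, Ψ a t
      = (((128*σ^3/Real.pi) ^ ((1:ℝ)/4) : ℝ) : ℂ)
        * Complex.exp ((3/2) * Complex.log ((m:ℂ)/((m:ℂ) + 2*Complex.I*(σ:ℂ)*(t:ℂ))))
        * (a:ℂ)
        * Complex.exp (-(σ:ℂ)*(m:ℂ)*(a:ℂ)^2/((m:ℂ) + 2*Complex.I*(σ:ℂ)*(t:ℂ)))) :
    ∀ t : ℝ, ∫ a in Set.Ioi (0:ℝ), a * ‖Ψ a t‖ ^ 2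
      = (2/m) * Real.sqrt (2/(Real.pi*σ)) * Real.sqrt (m^2/4 + σ^2*t^2) := by
  intro t
  have hπ : (0:ℝ) < Real.pi := Real.pi_pos
  set D : ℝ := m^2 + (2*σ*t)^2 with hD
  have hD0 : (0:ℝ) < D := by positivity
  set w : ℂ := (m:ℂ) + 2*Complex.I*(σ:ℂ)*(t:ℂ) with hw
  have hwre : w.re = m := by simp [hw]
  have hwim : w.im = 2*σ*t := by simp [hw]
  have hnsq : Complex.normSq w = D := by
    rw [Complex.normSq_apply, hwre, hwim, hD]; ring
  have habsw : ‖w‖ = Real.sqrt D := by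
    rw [Complex.norm_def, hnsq]
  have hsD : (0:ℝ) < Real.sqrt D := Real.sqrt_pos.mpr hD0
  have hA : (0:ℝ) < 128*σ^3/Real.pi := by positivity
  set β : ℝ := 2*σ*m^2/D with hβ
  have hβ0 : (0:ℝ) < β := by positivity
  set C : ℝ := Real.sqrt (128*σ^3/Real.pi) * (m/Real.sqrt D)^3 with hC
  -- pointwise computation of |Ψ|²
  have key : ∀ a : ℝ, ‖Ψ a t‖ ^ 2
      = C * (a^2 * Real.exp (-β * a^2)) := by
    intro a
    rw [hΨ a t]
    rw [norm_mul, norm_mul, norm_mul, Complex.norm_exp, Complex.norm_exp,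
      Complex.norm_real, Complex.norm_real, Real.norm_eq_abs, Real.norm_eq_abs]
    have hre1 : ((3/2 : ℂ) * Complex.log ((m:ℂ)/w)).re
        = (3/2) * Real.log (m / Real.sqrt D) := by
      rw [Complex.mul_re]
      simp only [Complex.log_re, Complex.log_im]
      rw [norm_div, Complex.norm_real, Real.norm_eq_abs, abs_of_pos hm, habsw]
      norm_num
    have hre2 : ((-(σ:ℂ)*(m:ℂ)*(a:ℂ)^2)/w).re = -(σ*m*a^2) * m / D := by
      rw [show -(σ:ℂ)*(m:ℂ)*(a:ℂ)^2 = ((-(σ*m*a^2) : ℝ) : ℂ) by push_cast; ring]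
      rw [Complex.div_re, Complex.ofReal_re, Complex.ofReal_im, hwre, hnsq]
      ring
    rw [hre1, hre2]
    have hmd : (0:ℝ) < m / Real.sqrt D := by positivity
    have e1 : |(128*σ^3/Real.pi) ^ ((1:ℝ)/4)| ^ 2 = Real.sqrt (128*σ^3/Real.pi) := by
      rw [abs_of_pos (Real.rpow_pos_of_pos hA _), Real.sqrt_eq_rpow,
        ← Real.rpow_natCast _ 2, ← Real.rpow_mul hA.le]
      norm_num
    have e2 : Real.exp ((3/2) * Real.log (m / Real.sqrt D)) ^ 2
        = (m / Real.sqrt D)^3 := by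
      rw [← Real.exp_nat_mul,
        show ((2:ℕ):ℝ)*((3/2)*Real.log (m/Real.sqrt D))
          = ((3:ℕ):ℝ)*Real.log (m/Real.sqrt D) by push_cast; ring,
        Real.exp_nat_mul, Real.exp_log hmd]
    have e3 : Real.exp (-(σ*m*a^2) * m / D) ^ 2 = Real.exp (-β * a^2) := by
      rw [← Real.exp_nat_mul]
      congr 1
      rw [hβ]
      push_cast
      ring
    rw [mul_pow, mul_pow, mul_pow, e1, e2, e3, sq_abs, hC]
    ring
  -- the integral
  calc ∫ a in Set.Ioi (0:ℝ), a * ‖Ψ a t‖ ^ 2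
      = ∫ a in Set.Ioi (0:ℝ), C * (a^3 * Real.exp (-β * a^2)) := by
        refine setIntegral_congr_fun measurableSet_Ioi (fun a ha => ?_)
        rw [key a]; ring
    _ = C * ∫ a in Set.Ioi (0:ℝ), a^3 * Real.exp (-β * a^2) :=
        MeasureTheory.integral_const_mul _ _
    _ = C * (1/(2*β^2)) := by rw [aux_cube_integral β hβ0]
    _ = (2/m) * Real.sqrt (2/(Real.pi*σ)) * Real.sqrt (m^2/4 + σ^2*t^2) := by
        have hE0 : (0:ℝ) < m^2/4 + σ^2*t^2 := by positivity
        have hD4 : D = 4*(m^2/4 + σ^2*t^2) := by rw [hD]; ring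
        set L : ℝ := C * (1/(2*β^2)) with hL
        set R : ℝ := (2/m) * Real.sqrt (2/(Real.pi*σ)) * Real.sqrt (m^2/4 + σ^2*t^2)
          with hR
        have hLnn : 0 ≤ L := by
          rw [hL, hC]; positivity
        have hRnn : 0 ≤ R := by
          rw [hR]; positivity
        have hsq : L^2 = R^2 := by
          rw [hL, hR, hC, hβ]
          rw [mul_pow, mul_pow, mul_pow, mul_pow,
            Real.sq_sqrt hA.le, Real.sq_sqrt (by positivity : (0:ℝ) ≤ 2/(Real.pi*σ)),
            Real.sq_sqrt hE0.le]
          have h6 : (Real.sqrt D^3)^2 = D^3 := by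
            rw [← pow_mul, show (3*2 = 2*3) from rfl, pow_mul, Real.sq_sqrt hD0.le]
          rw [div_pow m (Real.sqrt D), div_pow (m^3), h6, hD4]
          field_simp
          ring
        rw [← Real.sqrt_sq hLnn, ← Real.sqrt_sq hRnn, hsq]
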